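/- arXiv:2409.00865 — 11 statements merged into one kernel-verified Lean document; each statement's English description precedes it below -/
import Mathlib

section
/- The entanglement-of-formation function E is strictly increasing on [0,1], and E(0) = 0 and E(1) = 1. -/
/-- Binary Shannon entropy (base 2), with the convention `0 * log₂ 0 = 0`
(automatic since `Real.logb 2 0 = 0`). -/
noncomputable def binEntropy (p : ℝ) : ℝ :=
  -p * Real.logb 2 p - (1 - p) * Real.logb 2 (1 - p)

/-- Entanglement-of-formation function of the concurrence `C`. -/
noncomputable def eof (C : ℝ) : ℝ :=
  binEntropy ((1 + Real.sqrt (1 - C ^ 2)) / 2)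

lemma binEntropy_eq (p : ℝ) : binEntropy p = Real.binEntropy p / Real.log 2 := by
  simp [binEntropy, Real.binEntropy, Real.logb, Real.log_inv]
  ring

lemma g_mem {C : ℝ} (hC : C ∈ Set.Icc (0:ℝ) 1) :
    (1 + Real.sqrt (1 - C ^ 2)) / 2 ∈ Set.Icc (2⁻¹:ℝ) 1 := by
  obtain ⟨h0, h1⟩ := hC
  have hs0 : 0 ≤ Real.sqrt (1 - C ^ 2) := Real.sqrt_nonneg _
  have hs1 : Real.sqrt (1 - C ^ 2) ≤ 1 :=
    Real.sqrt_le_one.mpr (by nlinarith)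
  constructor <;> [linarith; linarith]

/-- The entanglement-of-formation function `E` is strictly increasing on `[0,1]`,
and `E 0 = 0` and `E 1 = 1`. -/
theorem eof_strictMonoOn_and_boundary :
    StrictMonoOn eof (Set.Icc (0 : ℝ) 1) ∧ eof 0 = 0 ∧ eof 1 = 1 := by
  refine ⟨?_, ?_, ?_⟩
  · intro a ha b hb hab
    have hg : (1 + Real.sqrt (1 - b ^ 2)) / 2 < (1 + Real.sqrt (1 - a ^ 2)) / 2 := by
      have : Real.sqrt (1 - b ^ 2) < Real.sqrt (1 - a ^ 2) := by
        apply Real.sqrt_lt_sqrt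
        · nlinarith [hb.1, hb.2]
        · nlinarith [ha.1, hb.1]
      linarith
    have hE := Real.binEntropy_strictAntiOn (g_mem hb) (g_mem ha) hg
    have hlog : 0 < Real.log 2 := Real.log_pos (by norm_num)
    simp only [eof, binEntropy_eq]
    gcongr
  · simp [eof, binEntropy]
  · have h : Real.logb 2 (2⁻¹ : ℝ) = -1 := by
      rw [Real.logb_inv, Real.logb_self_eq_one] <;> norm_num
    have h' : Real.logb 2 (1/2 : ℝ) = -1 := by rw [show (1/2:ℝ)=2⁻¹ by norm_num]; exact h
    norm_num [eof, binEntropy, h, h']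
end

section
/- Let x, y, z > 0 and t ≥ 0 with x + y + z + t = 1. Define the three-qubit pure state ψ : Fin 2 × Fin 2 × Fin 2 → ℂ by ψ(0,0,0) = √t, ψ(1,0,0) = √x, ψ(0,1,0) = √y, ψ(0,0,1) = √z, and ψ = 0 on all other basis indices. Define the reduced density matrix ρ_A ∈ Matrix (Fin 2) (Fin 2) ℂ of the first qubit by (ρ_A)ᵢⱼ = Σ_{b,c} ψ(i,b,c)·conj(ψ(j,b,c)). Then 4·det ρ_A = (2√(xy))² + (2√(xz))², i.e. 4·det ρ_A = 4xy + 4xz. (This expresses that W-class states have zero tangle: the squared concurrence of the 1|23 bipartition, C²_{1|23} = 4·det ρ_A, equals C²₁₂ + C²₁₃ where C₁₂ = 2√(xy) and C₁₃ = 2√(xz) are the concurrences of the reduced two-qubit states.) -/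
open scoped ComplexConjugate

/-- The W-class pure state `√t|000⟩ + √x|100⟩ + √y|010⟩ + √z|001⟩`. -/
noncomputable def wState (x y z t : ℝ) : Fin 2 × Fin 2 × Fin 2 → ℂ :=
  fun p =>
    if p = (0, 0, 0) then (Real.sqrt t : ℝ)
    else if p = (1, 0, 0) then (Real.sqrt x : ℝ)
    else if p = (0, 1, 0) then (Real.sqrt y : ℝ)
    else if p = (0, 0, 1) then (Real.sqrt z : ℝ)
    else 0

/-- The reduced density matrix of the first qubit. -/
noncomputable def rhoA (x y z t : ℝ) : Matrix (Fin 2) (Fin 2) ℂ :=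
  Matrix.of fun i j => ∑ b : Fin 2, ∑ c : Fin 2,
    wState x y z t (i, b, c) * conj (wState x y z t (j, b, c))

/-- W-class states have zero tangle: `4·det ρ_A = C₁₂² + C₁₃² = 4xy + 4xz`. -/
theorem wState_zero_tangle (x y z t : ℝ) (hx : 0 < x) (hy : 0 < y) (hz : 0 < z)
    (ht : 0 ≤ t) (hsum : x + y + z + t = 1) :
    4 * (rhoA x y z t).det = (4 * x * y + 4 * x * z : ℝ) := by
  simp only [rhoA, Matrix.det_fin_two, Matrix.of_apply, Fin.sum_univ_two,
    wState, Prod.mk.injEq]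
  norm_num
  have hst := Real.mul_self_sqrt ht
  have hsx := Real.mul_self_sqrt hx.le
  have hsy := Real.mul_self_sqrt hy.le
  have hsz := Real.mul_self_sqrt hz.le
  norm_cast
  have key : 4 * ((√t * √t + √z * √z + √y * √y) * (√x * √x) - √t * √x * (√x * √t)) = 4 * x * y + 4 * x * z := by
    nlinarith [hst, hsx, hsy, hsz, hsum]
  rw [key]
  push_cast
  ring
end

section
/- Define M : [0,1/2) → ℝ by M(g) = (1−2g)² − E(2g)². Then M is strictly decreasing on [0,1/2), M(0) = 1, and there is a unique g* ∈ (0,1/2) with M(g*) = 0; moreover g* ∈ (1/4, 3/10), M(g) > 0 for 0 ≤ g < g*, and M(g) < 0 for g* < g < 1/2. (This is the monogamy score M₁ = M₂ = E_s² − E₁₂² − E₁₃² − E₂₃² of the non-generic GHZ-class state ψ(g₁,0,0,r) with r = 1, where E_s = E_a = 1−2g₁, E₁₂ = E₁₃ = 0 and E₂₃ = E(2g₁); the monogamy relation holds exactly up to the threshold g* ≈ 0.28 and is violated beyond it.) -/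
/-- The monogamy score of the non-generic GHZ-class state `ψ(g,0,0,1)`:
`M(g) = (1-2g)² - E(2g)²`. -/
noncomputable def M (g : ℝ) : ℝ := (1 - 2 * g) ^ 2 - (eof (2 * g)) ^ 2

lemma log_two_pos' : (0 : ℝ) < Real.log 2 := Real.log_pos one_lt_two

lemma eof_nonneg {C : ℝ} : 0 ≤ eof C := by
  rw [eof, binEntropy_eq]
  apply div_nonneg _ log_two_pos'.le
  apply Real.binEntropy_nonneg
  · have := Real.sqrt_nonneg (1 - C ^ 2); linarith
  · have h1 : Real.sqrt (1 - C ^ 2) ≤ 1 := Real.sqrt_le_one.mpr (by nlinarith)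
    linarith

lemma eof_strictMono {a b : ℝ} (ha : 0 ≤ a) (hab : a < b) (hb : b ≤ 1) :
    eof a < eof b := by
  have hsq : Real.sqrt (1 - b ^ 2) < Real.sqrt (1 - a ^ 2) := by
    apply Real.sqrt_lt_sqrt (by nlinarith) (by nlinarith)
  have hsa : Real.sqrt (1 - a ^ 2) ≤ 1 := Real.sqrt_le_one.mpr (by nlinarith)
  have hsb : 0 ≤ Real.sqrt (1 - b ^ 2) := Real.sqrt_nonneg _
  rw [eof, eof, binEntropy_eq, binEntropy_eq]
  have hlt := Real.binEntropy_strictAntiOn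
    (Set.mem_Icc.mpr ⟨by rw [inv_eq_one_div]; linarith, by linarith⟩)
    (Set.mem_Icc.mpr ⟨by rw [inv_eq_one_div]; linarith, by linarith⟩)
    (show (1 + Real.sqrt (1 - b ^ 2)) / 2 < (1 + Real.sqrt (1 - a ^ 2)) / 2 by linarith)
  exact div_lt_div_of_pos_right hlt log_two_pos'

lemma M_strictAnti : StrictAntiOn M (Set.Ico (0 : ℝ) (1 / 2)) := by
  intro a ha b hb hab
  obtain ⟨ha0, ha1⟩ := ha
  obtain ⟨hb0, hb1⟩ := hb
  have h1 : eof (2 * a) < eof (2 * b) :=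
    eof_strictMono (by linarith) (by linarith) (by linarith)
  have h2 : (0 : ℝ) ≤ eof (2 * a) := eof_nonneg
  have h3 : (1 - 2 * b) ^ 2 < (1 - 2 * a) ^ 2 := by nlinarith
  have h4 : eof (2 * a) ^ 2 < eof (2 * b) ^ 2 := by nlinarith
  simp only [M]
  linarith

lemma M_zero : M 0 = 1 := by
  have : eof 0 = 0 := by
    simp [eof, binEntropy]
  simp [M, this]

lemma sqrt34 : Real.sqrt (1 - (2 * (1/4 : ℝ)) ^ 2) = Real.sqrt 3 / 2 := by
  rw [show (1 - (2 * (1/4 : ℝ)) ^ 2) = (Real.sqrt 3 / 2) ^ 2 by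
    rw [div_pow, Real.sq_sqrt (by norm_num : (3:ℝ) ≥ 0)]; norm_num]
  exact Real.sqrt_sq (by positivity)

lemma M_quarter_pos : 0 < M (1/4) := by
  set s := Real.sqrt 3 with hs
  have hs2 : s ^ 2 = 3 := Real.sq_sqrt (by norm_num)
  have hslb : 1.7320508 < s := by
    rw [show s = Real.sqrt 3 from rfl]
    rw [show (1.7320508 : ℝ) = Real.sqrt (1.7320508 ^ 2) from (Real.sqrt_sq (by norm_num)).symm]
    exact Real.sqrt_lt_sqrt (by norm_num) (by norm_num)
  have hsub : s < 1.7320509 := by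
    rw [show s = Real.sqrt 3 from rfl]
    rw [show (1.7320509 : ℝ) = Real.sqrt (1.7320509 ^ 2) from (Real.sqrt_sq (by norm_num)).symm]
    exact Real.sqrt_lt_sqrt (by norm_num) (by norm_num)
  set p : ℝ := (2 + s) / 4 with hp
  have hpval : (1 + Real.sqrt (1 - (2 * (1/4 : ℝ)) ^ 2)) / 2 = p := by
    rw [sqrt34]; rw [hp]; ring
  have hppos : 0 < p := by rw [hp]; nlinarith
  have hp1 : p < 1 := by rw [hp]; nlinarith
  -- 1 - p = 1/(16 p)
  have hcompl : 1 - p = (16 * p)⁻¹ := by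
    rw [hp, inv_eq_one_div, eq_div_iff (by nlinarith : (16:ℝ) * ((2 + s) / 4) ≠ 0)]
    nlinarith
  -- logb 2 (1 - p) = -4 - logb 2 p
  have hlogb16 : Real.logb 2 16 = 4 := by
    rw [show (16 : ℝ) = 2 ^ (4:ℕ) by norm_num, Real.logb, Real.log_pow]
    push_cast
    rw [mul_div_assoc, div_self log_two_pos'.ne', mul_one]
  have hlog1p : Real.logb 2 (1 - p) = -4 - Real.logb 2 p := by
    rw [hcompl, Real.logb_inv, Real.logb_mul (by norm_num) hppos.ne', hlogb16]
    ring
  -- lower bound on logb 2 p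
  have hlogp_lb : Real.log p ≥ 4 * s - 7 := by
    have h1 : 1 - p⁻¹ ≤ Real.log p := Real.one_sub_inv_le_log_of_pos hppos
    have h2 : p⁻¹ = 8 - 4 * s := by
      rw [hp, inv_div, div_eq_iff (by nlinarith : (2:ℝ) + s ≠ 0)]
      nlinarith
    rw [h2] at h1
    linarith
  have hL1 : (0.6931471803 : ℝ) < Real.log 2 := Real.log_two_gt_d9
  have hL2 : Real.log 2 < 0.6931471808 := Real.log_two_lt_d9
  have hkey : Real.logb 2 p > s - 2 := by
    rw [Real.logb, gt_iff_lt, lt_div_iff₀ log_two_pos']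
    nlinarith
  -- evaluate eof (2 * (1/4))
  have heof : eof (2 * (1/4)) = -(s/2) * Real.logb 2 p + (2 - s) := by
    rw [eof, hpval, binEntropy, hlog1p]
    rw [hp]; ring
  have heoflt : eof (2 * (1/4)) < 1/2 := by
    rw [heof]
    have hsp : (0:ℝ) < s / 2 := by nlinarith
    nlinarith [mul_lt_mul_of_pos_left hkey hsp, hs2]
  have h0 : (0:ℝ) ≤ eof (2 * (1/4)) := eof_nonneg
  rw [M]
  nlinarith

lemma M_threeTenths_neg : M (3/10) < 0 := by
  have hsqrt : Real.sqrt (1 - (2 * (3/10 : ℝ)) ^ 2) = 4/5 := by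
    rw [show (1 - (2 * (3/10 : ℝ)) ^ 2) = (4/5 : ℝ) ^ 2 by norm_num]
    exact Real.sqrt_sq (by norm_num)
  have hpval : (1 + Real.sqrt (1 - (2 * (3/10 : ℝ)) ^ 2)) / 2 = 9/10 := by
    rw [hsqrt]; norm_num
  have hlogkey : 10 * Real.log 10 - 18 * Real.log 3 - 4 * Real.log 2 > 0 := by
    have h : Real.log ((3:ℝ)^(18:ℕ) * 2^(4:ℕ)) < Real.log ((10:ℝ)^(10:ℕ)) :=
      Real.log_lt_log (by positivity) (by norm_num)
    rw [Real.log_mul (by positivity) (by positivity), Real.log_pow, Real.log_pow,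
      Real.log_pow] at h
    push_cast at h
    linarith
  have hlog10 : Real.log 10 = Real.log 2 + Real.log 5 := by
    rw [show (10:ℝ) = 2 * 5 by norm_num, Real.log_mul (by norm_num) (by norm_num)]
  -- eof (2*(3/10)) = logb 2 10 - (9/5) * logb 2 3
  have heof : eof (2 * (3/10)) =
      (Real.log 10 - (9/10) * Real.log 9) / Real.log 2 := by
    rw [eof, hpval, binEntropy_eq, Real.binEntropy]
    have h910 : Real.log ((9/10 : ℝ))⁻¹ = Real.log 10 - Real.log 9 := by
      rw [Real.log_inv, Real.log_div (by norm_num) (by norm_num)]; ring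
    have h110 : Real.log ((1 - (9/10 : ℝ)))⁻¹ = Real.log 10 := by
      norm_num
    rw [h910]
    norm_num [h110]
    ring
  have hlog9 : Real.log 9 = 2 * Real.log 3 := by
    rw [show (9:ℝ) = 3 ^ (2:ℕ) by norm_num, Real.log_pow]; push_cast; ring
  have heofgt : eof (2 * (3/10)) > 2/5 := by
    rw [heof, gt_iff_lt, lt_div_iff₀ log_two_pos', hlog9]
    nlinarith
  rw [M]
  nlinarith [heofgt]

lemma M_continuous : Continuous M := by
  have heq : eof = fun C => Real.binEntropy ((1 + Real.sqrt (1 - C ^ 2)) / 2) / Real.log 2 := by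
    funext C
    rw [eof, binEntropy_eq]
  have hc : Continuous eof := by
    rw [heq]
    fun_prop
  unfold M
  fun_prop

/-- `M` is strictly decreasing on `[0,1/2)`, `M 0 = 1`, and there is a unique
`g* ∈ (0,1/2)` with `M g* = 0`; moreover `g* ∈ (1/4, 3/10)`, `M g > 0` for
`0 ≤ g < g*`, and `M g < 0` for `g* < g < 1/2`. -/
theorem monogamy_threshold :
    StrictAntiOn M (Set.Ico (0 : ℝ) (1 / 2)) ∧ M 0 = 1 ∧
    (∃! gs : ℝ, gs ∈ Set.Ioo (0 : ℝ) (1 / 2) ∧ M gs = 0) ∧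
    ∀ gs : ℝ, gs ∈ Set.Ioo (0 : ℝ) (1 / 2) → M gs = 0 →
      gs ∈ Set.Ioo (1 / 4 : ℝ) (3 / 10) ∧
      (∀ g : ℝ, 0 ≤ g → g < gs → 0 < M g) ∧
      (∀ g : ℝ, gs < g → g < 1 / 2 → M g < 0) := by
  have hanti := M_strictAnti
  -- existence of a zero in (1/4, 3/10)
  have hex : ∃ g0 ∈ Set.Ioo (1/4 : ℝ) (3/10), M g0 = 0 := by
    have hsub := intermediate_value_Ioo' (a := (1/4 : ℝ)) (b := 3/10) (by norm_num)
      M_continuous.continuousOn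
    have h0mem : (0:ℝ) ∈ Set.Ioo (M (3/10)) (M (1/4)) :=
      ⟨M_threeTenths_neg, M_quarter_pos⟩
    obtain ⟨g0, hg0, hMg0⟩ := hsub h0mem
    exact ⟨g0, hg0, hMg0⟩
  obtain ⟨g0, hg0, hMg0⟩ := hex
  have hg0' : g0 ∈ Set.Ioo (0:ℝ) (1/2) := ⟨by linarith [hg0.1], by linarith [hg0.2]⟩
  -- uniqueness via strict antitonicity
  have huniq : ∀ y ∈ Set.Ioo (0:ℝ) (1/2), M y = 0 → y = g0 := by
    intro y hy hMy
    have hyI : y ∈ Set.Ico (0:ℝ) (1/2) := ⟨hy.1.le, hy.2⟩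
    have hg0I : g0 ∈ Set.Ico (0:ℝ) (1/2) := ⟨hg0'.1.le, hg0'.2⟩
    rcases lt_trichotomy y g0 with h | h | h
    · exfalso; have := hanti hyI hg0I h; rw [hMy, hMg0] at this; exact lt_irrefl 0 this
    · exact h
    · exfalso; have := hanti hg0I hyI h; rw [hMy, hMg0] at this; exact lt_irrefl 0 this
  refine ⟨hanti, M_zero, ⟨g0, ⟨hg0', hMg0⟩, fun y hy => huniq y hy.1 hy.2⟩, ?_⟩
  intro gs hgs hMgs
  have hgseq : gs = g0 := huniq gs hgs hMgs
  subst hgseq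
  refine ⟨hg0, ?_, ?_⟩
  · intro g hg0le hglt
    have hgI : g ∈ Set.Ico (0:ℝ) (1/2) := ⟨hg0le, by linarith [hg0'.2]⟩
    have := hanti hgI ⟨hg0'.1.le, hg0'.2⟩ hglt
    rw [hMg0] at this
    linarith
  · intro g hgt hglt
    have hgI : g ∈ Set.Ico (0:ℝ) (1/2) := ⟨by linarith [hg0'.1], hglt⟩
    have := hanti ⟨hg0'.1.le, hg0'.2⟩ hgI hgt
    rw [hMg0] at this
    linarith
end

section
/- There exist g ∈ (0,1/2) and r ∈ (0,1) such that (1 − 2g(1−r))² < E(4g r²/(1+r⁴))². (That is, the source-entanglement monogamy relation E_s² ≥ E₁₂² + E₁₃² + E₂₃² is violated by some non-generic GHZ-class states ψ(g₁,0,0,r) with r ∈ (0,1).) -/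
lemma log_13div20_lt : Real.log (13/20) < -(43/100) := by
  have h := Real.abs_log_sub_add_sum_range_le (x := 7/20) (by rw [abs_of_pos] <;> norm_num) 8
  have h20 : (1 : ℝ) - 7/20 = 13/20 := by norm_num
  rw [h20] at h
  rw [abs_le] at h
  have := h.2
  simp only [Finset.sum_range_succ, Finset.sum_range_zero] at this
  rw [abs_of_pos (by norm_num)] at this
  norm_num at this ⊢
  linarith

lemma log_7div20_lt : Real.log (7/20) < -(10497/10000) := by
  have h := Real.abs_log_sub_add_sum_range_le (x := 3/10) (by rw [abs_of_pos] <;> norm_num) 8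
  have h10 : (1 : ℝ) - 3/10 = 7/10 := by norm_num
  rw [h10] at h
  rw [abs_le] at h
  have h2 := h.2
  simp only [Finset.sum_range_succ, Finset.sum_range_zero] at h2
  rw [abs_of_pos (by norm_num)] at h2
  have hsplit : Real.log (7/20) = Real.log (7/10) - Real.log 2 := by
    rw [← Real.log_div (by norm_num) (by norm_num)]
    norm_num
  have hl2 := Real.log_two_gt_d9
  rw [hsplit]
  norm_num at h2 ⊢
  linarith

lemma binEntropy_13div20_gt : (451/500 : ℝ) * Real.log 2 < Real.binEntropy (13/20) := by
  have h1 := log_13div20_lt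
  have h2 := log_7div20_lt
  have hl2 := Real.log_two_lt_d9
  unfold Real.binEntropy
  rw [Real.log_inv, Real.log_inv]
  have h20 : (1 : ℝ) - 13/20 = 7/20 := by norm_num
  rw [h20]
  nlinarith

/-- The source-entanglement monogamy relation is violated by some non-generic
GHZ-class states `ψ(g,0,0,r)` with `r ∈ (0,1)`. -/
theorem exists_source_monogamy_violation :
    ∃ g ∈ Set.Ioo (0 : ℝ) (1 / 2), ∃ r ∈ Set.Ioo (0 : ℝ) 1,
      (1 - 2 * g * (1 - r)) ^ 2 < (eof (4 * g * r ^ 2 / (1 + r ^ 4))) ^ 2 := by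
  refine ⟨49/100, by norm_num, 9/10, by norm_num, ?_⟩
  have hC : 4 * (49/100 : ℝ) * (9/10) ^ 2 / (1 + (9/10) ^ 4) = 15876/16561 := by norm_num
  rw [hC]
  have hE : (1 : ℝ) - 2 * (49/100) * (1 - 9/10) = 451/500 := by norm_num
  rw [hE]
  set s : ℝ := Real.sqrt (1 - (15876/16561 : ℝ) ^ 2) with hs_def
  have hs0 : 0 ≤ s := Real.sqrt_nonneg _
  have hs : s ≤ 3/10 := by
    rw [hs_def, Real.sqrt_le_left (by norm_num)]
    norm_num
  set p : ℝ := (1 + s) / 2 with hp_def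
  have hp_lo : (2 : ℝ)⁻¹ ≤ p := by rw [hp_def]; linarith
  have hp_hi : p ≤ 13/20 := by rw [hp_def]; linarith
  have hmono : Real.binEntropy (13/20) ≤ Real.binEntropy p := by
    rcases lt_or_eq_of_le hp_hi with h | h
    · exact le_of_lt (Real.binEntropy_strictAntiOn
        ⟨hp_lo, by linarith⟩ ⟨by norm_num, by norm_num⟩ h)
    · rw [h]
  have hl2pos : 0 < Real.log 2 := Real.log_pos (by norm_num)
  have key : (451/500 : ℝ) < eof (15876/16561) := by
    have : eof (15876/16561) = Real.binEntropy p / Real.log 2 := by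
      rw [eof, binEntropy_eq]
    rw [this, lt_div_iff₀ hl2pos]
    calc (451/500 : ℝ) * Real.log 2 < Real.binEntropy (13/20) := binEntropy_13div20_gt
      _ ≤ Real.binEntropy p := hmono
  exact pow_lt_pow_left₀ key (by norm_num) (by norm_num)
end

section
/- There exist g ∈ (0,1/2) and r ∈ (0,1) such that ((1−2g)r)² < E(4g r²/(1+r⁴))². (That is, the accessible-entanglement monogamy relation E_a² ≥ E₁₂² + E₁₃² + E₂₃² is violated by some non-generic GHZ-class states ψ(g₁,0,0,r) with r ∈ (0,1).) -/
/-- The accessible-entanglement monogamy relation is violated by some non-generic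
GHZ-class states `ψ(g,0,0,r)` with `r ∈ (0,1)`. -/
theorem exists_accessible_monogamy_violation :
    ∃ g ∈ Set.Ioo (0 : ℝ) (1 / 2), ∃ r ∈ Set.Ioo (0 : ℝ) 1,
      ((1 - 2 * g) * r) ^ 2 < (eof (4 * g * r ^ 2 / (1 + r ^ 4))) ^ 2 := by
  refine ⟨49/100, by norm_num, 1/2, by norm_num, ?_⟩
  have hC : (4 * (49/100 : ℝ) * (1/2) ^ 2 / (1 + (1/2) ^ 4)) = 196/425 := by norm_num
  rw [hC]
  set s : ℝ := Real.sqrt (1 - (196/425 : ℝ) ^ 2) with hs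
  have hs0 : (0:ℝ) ≤ s := Real.sqrt_nonneg _
  have hsub : s ≤ 24/25 := by
    have : Real.sqrt (1 - (196/425 : ℝ) ^ 2) ≤ Real.sqrt ((24/25)^2) := by
      apply Real.sqrt_le_sqrt; norm_num
    simpa [Real.sqrt_sq (by norm_num : (0:ℝ) ≤ 24/25)] using this
  have hslb : (3/4 : ℝ) ≤ s := by
    rw [hs, show (3/4 : ℝ) = Real.sqrt ((3/4)^2) by
      rw [Real.sqrt_sq]; norm_num]
    apply Real.sqrt_le_sqrt; norm_num
  have heof : eof (196/425) = binEntropy ((1 + s) / 2) := rfl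
  set p : ℝ := (1 + s) / 2 with hp
  have hp1 : p ≤ 1 := by rw [hp]; linarith
  have hp0 : 0 < p := by rw [hp]; linarith
  have hx_lb : (1/50 : ℝ) ≤ 1 - p := by rw [hp]; linarith
  have hx_ub : 1 - p ≤ 1/8 := by rw [hp]; linarith
  have hx0 : (0:ℝ) < 1 - p := by linarith
  -- first term nonneg
  have ht1 : 0 ≤ -p * Real.logb 2 p := by
    have := Real.logb_nonpos (by norm_num : (1:ℝ) < 2) hp0.le hp1
    nlinarith
  -- second term: logb 2 (1-p) ≤ -3
  have hlog : Real.logb 2 (1 - p) ≤ -3 := by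
    have h8 : Real.logb 2 (1 - p) ≤ Real.logb 2 (1/8) :=
      Real.logb_le_logb_of_le (by norm_num : (1:ℝ) < 2) hx0 hx_ub
    have : Real.logb 2 (1/8 : ℝ) = -3 := by
      rw [show (1/8 : ℝ) = 2 ^ (-3 : ℝ) by
        rw [Real.rpow_neg (by norm_num), show (3:ℝ) = ((3:ℕ):ℝ) by norm_num,
          Real.rpow_natCast]; norm_num]
      exact Real.logb_rpow (by norm_num) (by norm_num)
    linarith
  have ht2 : (3/50 : ℝ) ≤ -(1 - p) * Real.logb 2 (1 - p) := by nlinarith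
  have heof_lb : (3/50 : ℝ) ≤ eof (196/425) := by
    rw [heof]; unfold binEntropy
    nlinarith
  have hlhs : ((1 - 2 * (49/100 : ℝ)) * (1/2)) ^ 2 = (1/100 : ℝ)^2 := by norm_num
  rw [hlhs]
  have : (1/100 : ℝ)^2 < (3/50)^2 := by norm_num
  calc (1/100 : ℝ)^2 < (3/50)^2 := this
    _ ≤ (eof (196/425))^2 := by
        apply pow_le_pow_left₀ (by norm_num) heof_lb
end

section
/- There exist g₁, g₂ ∈ (0,1/2) such that ((1−2g₁)(1−2g₂))² < E(2g₂√(1−4g₁²))² + E(2g₁√(1−4g₂²))². (For non-generic GHZ-class states ψ(g₁,g₂,0,r) with r = 1, the accessible-entanglement monogamy relation E_a² ≥ E₁₂² + E₁₃² + E₂₃² is violated for some parameter values.) -/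
lemma eof_twelve_twentyfive : (9 : ℝ)/50 ≤ eof (12/25) := by
  have h481 : (1 : ℝ) - (12/25)^2 = 481/625 := by norm_num
  have hsle : Real.sqrt (481/625) ≤ 22/25 := by
    rw [show (22:ℝ)/25 = Real.sqrt ((22/25)^2) by rw [Real.sqrt_sq]; norm_num]
    exact Real.sqrt_le_sqrt (by norm_num)
  have hsge : (21:ℝ)/25 ≤ Real.sqrt (481/625) := by
    rw [show (21:ℝ)/25 = Real.sqrt ((21/25)^2) by rw [Real.sqrt_sq]; norm_num]
    exact Real.sqrt_le_sqrt (by norm_num)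
  set s := Real.sqrt (481/625) with hs
  set p := (1 + s)/2 with hp
  have hp1 : p ≤ 47/50 := by rw [hp]; linarith
  have hp0 : 0 ≤ p := by rw [hp]; linarith
  have h1p_lo : (3:ℝ)/50 ≤ 1 - p := by rw [hp]; linarith
  have h1p_hi : 1 - p ≤ (1:ℝ)/8 := by rw [hp]; linarith
  have hterm1 : 0 ≤ -p * Real.logb 2 p := by
    have := Real.logb_nonpos (b := 2) (x := p) one_lt_two hp0 (by linarith)
    nlinarith
  have hlogb : Real.logb 2 (1 - p) ≤ -3 := by
    have h8 : Real.logb 2 ((1:ℝ)/8) = -3 := by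
      rw [show (1:ℝ)/8 = (2:ℝ)^(-3:ℝ) by
        rw [show (-3:ℝ) = ((-3:ℤ):ℝ) by norm_num, Real.rpow_intCast]; norm_num]
      exact Real.logb_rpow (by norm_num) (by norm_num)
    calc Real.logb 2 (1 - p) ≤ Real.logb 2 ((1:ℝ)/8) :=
          (Real.logb_le_logb (by norm_num) (by linarith) (by norm_num)).mpr h1p_hi
      _ = -3 := h8
  have hterm2 : (9:ℝ)/50 ≤ -(1 - p) * Real.logb 2 (1 - p) := by nlinarith
  have : eof (12/25) = -p * Real.logb 2 p - (1 - p) * Real.logb 2 (1 - p) := by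
    rw [eof, binEntropy, h481, ← hs, ← hp]
  rw [this]; linarith

/-- For non-generic GHZ-class states `ψ(g₁,g₂,0,1)`, the accessible-entanglement
monogamy relation is violated for some parameter values. -/
theorem exists_accessible_monogamy_violation_two_params :
    ∃ g₁ ∈ Set.Ioo (0 : ℝ) (1 / 2), ∃ g₂ ∈ Set.Ioo (0 : ℝ) (1 / 2),
      ((1 - 2 * g₁) * (1 - 2 * g₂)) ^ 2 <
        (eof (2 * g₂ * Real.sqrt (1 - 4 * g₁ ^ 2))) ^ 2 +
        (eof (2 * g₁ * Real.sqrt (1 - 4 * g₂ ^ 2))) ^ 2 := by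
  refine ⟨2/5, by norm_num, 2/5, by norm_num, ?_⟩
  have hsqrt : Real.sqrt (1 - 4 * (2/5 : ℝ)^2) = 3/5 := by
    rw [show (1 : ℝ) - 4 * (2/5)^2 = (3/5)^2 by norm_num, Real.sqrt_sq]; norm_num
  rw [hsqrt, show (2 : ℝ) * (2/5) * (3/5) = 12/25 by norm_num]
  have h := eof_twelve_twentyfive
  nlinarith
end

section
/- For all g ∈ (0,1/2) and all y ∈ (0, 1/√2]: (1 − 8g³)² ≥ 3·E(8g(1−4g²)·y²/(1+4y⁴))². (Generic GHZ-class states with g₁ = g₂ = g₃ = g and z = (±1+i)y, so that Re(z²) = 0 and the source entanglement is E_s = 1−8g³, satisfy the source-entanglement monogamy relation E_s² ≥ E₁₂² + E₁₃² + E₂₃².) -/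
set_option maxHeartbeats 1600000 in
/-- Key analytic lemma: if `0 < C ≤ 39/100` then `eof C ≤ (5/4)·√((1-√(1-C²))/2)`
and that square root is at most `C·(20/39)`; packaged as `3·(eof C)² ≤ (3/2·C)²`-ready
bound `eof C ≤ (25/39)·C · (5/4)·(20/39)`… we prove directly `3·(eof C)² ≤ (9/4)·C²`. -/
theorem eof_sq_bound (C : ℝ) (hCpos : 0 < C) (hC39 : C ≤ 39 / 100) :
    3 * (eof C) ^ 2 ≤ (9 / 4) * C ^ 2 := by
  have hC2 : (0:ℝ) ≤ 1 - C ^ 2 := by nlinarith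
  obtain ⟨s, hsdef⟩ : ∃ s, s = Real.sqrt (1 - C ^ 2) := ⟨_, rfl⟩
  have hs_sq : s ^ 2 = 1 - C ^ 2 := by rw [hsdef]; exact Real.sq_sqrt hC2
  have hs0 : 0 ≤ s := hsdef ▸ Real.sqrt_nonneg _
  have hs_lb : 23 / 25 ≤ s := by
    rw [hsdef, Real.le_sqrt (by norm_num) hC2]
    nlinarith
  have hs_lt1 : s < 1 := by nlinarith
  obtain ⟨t, htdef⟩ : ∃ t, t = (1 - s) / 2 := ⟨_, rfl⟩
  have ht0 : 0 < t := by rw [htdef]; linarith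
  have ht25 : t ≤ 1 / 25 := by rw [htdef]; linarith
  obtain ⟨u, hudef⟩ : ∃ u, u = Real.sqrt t := ⟨_, rfl⟩
  have hu0 : 0 < u := hudef ▸ Real.sqrt_pos.mpr ht0
  have hu_sq : u ^ 2 = t := by rw [hudef]; exact Real.sq_sqrt ht0.le
  have hu5 : u ≤ 1 / 5 := by nlinarith
  have hL : 0 < Real.log 2 := Real.log_pos (by norm_num)
  obtain ⟨p, hpdef⟩ : ∃ p, p = (1 + s) / 2 := ⟨_, rfl⟩
  have hp0 : 0 < p := by rw [hpdef]; linarith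
  have hp1 : p < 1 := by rw [hpdef]; linarith
  have hpt : 1 - p = t := by rw [hpdef, htdef]; ring
  have heq : eof C = -p * Real.logb 2 p - t * Real.logb 2 t := by
    rw [eof, binEntropy, ← hsdef, ← hpdef, hpt]
  -- nonnegativity of eof
  have h_nonneg : 0 ≤ eof C := by
    rw [heq]
    have h1 : Real.logb 2 p ≤ 0 := Real.logb_nonpos (by norm_num) hp0.le hp1.le
    have h2 : Real.logb 2 t ≤ 0 := Real.logb_nonpos (by norm_num) ht0.le (by linarith)
    nlinarith [mul_nonpos_of_nonneg_of_nonpos hp0.le h1,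
      mul_nonpos_of_nonneg_of_nonpos ht0.le h2]
  -- bound term 1 : -p * log p ≤ t
  have hterm1 : -p * Real.log p ≤ t := by
    have hinv : Real.log p⁻¹ ≤ p⁻¹ - 1 := Real.log_le_sub_one_of_pos (by positivity)
    rw [Real.log_inv] at hinv
    have h2 : p * (-Real.log p) ≤ p * (p⁻¹ - 1) :=
      mul_le_mul_of_nonneg_left (by linarith) hp0.le
    have h3 : p * (p⁻¹ - 1) = 1 - p := by field_simp
    nlinarith [hpt]
  -- bound term 2 : -t * log t ≤ 4 t log 2 - 2 t + u/2
  have hterm2 : -t * Real.log t ≤ 4 * t * Real.log 2 - 2 * t + u / 2 := by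
    have hlogt : Real.log t = 2 * Real.log u := by
      rw [← hu_sq, Real.log_pow]; push_cast; ring
    have hinv : Real.log (4 * u)⁻¹ ≤ (4 * u)⁻¹ - 1 :=
      Real.log_le_sub_one_of_pos (by positivity)
    rw [Real.log_inv, Real.log_mul (by norm_num) hu0.ne',
      show (4:ℝ) = 2^2 by norm_num, Real.log_pow] at hinv
    have hkey : -Real.log u ≤ 2 * Real.log 2 + (4 * u)⁻¹ - 1 := by
      push_cast at hinv; linarith
    have hmul : t * (-Real.log u) ≤ t * (2 * Real.log 2 + (4 * u)⁻¹ - 1) :=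
      mul_le_mul_of_nonneg_left hkey ht0.le
    have htu : t * (4 * u)⁻¹ = u / 4 := by
      rw [← hu_sq]; field_simp
    rw [hlogt]; nlinarith [hmul, htu]
  -- combine entropy bound: eof C ≤ (5/4) u
  have hB : eof C ≤ (5/4) * u := by
    rw [heq]
    have h1 : -p * Real.logb 2 p = (-p * Real.log p) / Real.log 2 := by
      rw [Real.logb]; ring
    have h2 : -(t * Real.logb 2 t) = (-t * Real.log t) / Real.log 2 := by
      rw [Real.logb]; ring
    have hsum : -p * Real.logb 2 p - t * Real.logb 2 t
        ≤ (t + (4 * t * Real.log 2 - 2 * t + u / 2)) / Real.log 2 := by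
      rw [sub_eq_add_neg, h1, h2, ← add_div]
      have hnum : -p * Real.log p + -t * Real.log t
          ≤ t + (4 * t * Real.log 2 - 2 * t + u / 2) := by
        linarith [hterm1, hterm2]
      exact div_le_div_of_nonneg_right hnum hL.le
    refine hsum.trans ?_
    rw [div_le_iff₀ hL, ← hu_sq]
    have hl1 : (2:ℝ)/3 < Real.log 2 := lt_trans (by norm_num) Real.log_two_gt_d9
    have haux : (4 * Real.log 2 - 1) * u + 1/2 ≤ (5/4) * Real.log 2 := by
      nlinarith [mul_nonneg (show (0:ℝ) ≤ 1/5 - u by linarith)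
        (show (0:ℝ) ≤ 4 * Real.log 2 - 1 by linarith)]
    nlinarith [mul_le_mul_of_nonneg_left haux hu0.le]
  -- C ≥ (39/20) u
  have hCu : (39/20) * u ≤ C := by
    have hC2eq : C ^ 2 = 4 * t * (1 - t) := by
      have h : C ^ 2 = 1 - s ^ 2 := by linarith
      rw [h, htdef]; ring
    have hC2ge : (96/25) * u^2 ≤ C ^ 2 := by
      rw [hC2eq, hu_sq]; nlinarith
    nlinarith [hCpos, hu0, hC2ge]
  have hsq1 : (eof C) ^ 2 ≤ ((5/4) * u) ^ 2 := by
    apply pow_le_pow_left₀ h_nonneg hB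
  have hsq2 : ((39/20) * u) ^ 2 ≤ C ^ 2 := by
    apply pow_le_pow_left₀ (by positivity) hCu
  nlinarith [hsq1, hsq2, sq_nonneg u]

set_option maxHeartbeats 1600000 in
/-- Generic GHZ-class states with `g₁ = g₂ = g₃ = g` and `z = (±1+i)y` satisfy
the source-entanglement monogamy relation `E_s² ≥ E₁₂² + E₁₃² + E₂₃²`. -/
theorem source_monogamy_generic_imaginary (g y : ℝ)
    (hg : g ∈ Set.Ioo (0 : ℝ) (1 / 2)) (hy : y ∈ Set.Ioc (0 : ℝ) (1 / Real.sqrt 2)) :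
    (1 - 8 * g ^ 3) ^ 2 ≥
      3 * (eof (8 * g * (1 - 4 * g ^ 2) * y ^ 2 / (1 + 4 * y ^ 4))) ^ 2 := by
  obtain ⟨hg0, hg2⟩ := hg
  obtain ⟨hy0, -⟩ := hy
  have hg4 : 0 < 1 - 4 * g ^ 2 := by nlinarith
  have hyd : (0:ℝ) < 1 + 4 * y ^ 4 := by positivity
  set C : ℝ := 8 * g * (1 - 4 * g ^ 2) * y ^ 2 / (1 + 4 * y ^ 4) with hCdef
  have hCpos : 0 < C := by
    apply div_pos _ hyd
    positivity
  have hCle : C ≤ 2 * g - 8 * g ^ 3 := by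
    rw [hCdef, div_le_iff₀ hyd]
    nlinarith [mul_nonneg (mul_nonneg (mul_pos hg0 hg4).le (sq_nonneg (1 - 2 * y ^ 2))) hg0.le,
      mul_nonneg (mul_pos hg0 hg4).le (sq_nonneg (1 - 2 * y ^ 2))]
  have hC39 : C ≤ 39 / 100 := by
    refine hCle.trans ?_
    nlinarith [mul_nonneg (sq_nonneg (g - 29/100)) hg0.le, sq_nonneg (g - 29/100)]
  have hkey := eof_sq_bound C hCpos hC39
  have hEs : 3/2 * C ≤ 1 - 8 * g ^ 3 := by
    have h : 3/2 * (2 * g - 8 * g^3) ≤ 1 - 8 * g^3 := by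
      nlinarith [mul_nonneg (sq_nonneg (2*g - 1)) (by linarith : (0:ℝ) ≤ g + 1)]
    linarith [hCle]
  have hsq3 : (3/2 * C) ^ 2 ≤ (1 - 8 * g ^ 3) ^ 2 := by
    apply pow_le_pow_left₀ (by positivity) hEs
  nlinarith [hkey, hsq3]
end

section
/- For all g ∈ (0,1/2): 1 ≥ 3·E(2g(1−4g²)/(1+8g³))². (States from MES₃ of the form (1/√k)·g_x¹⊗g_x²⊗g_x³|GHZ⟩ with g₁ = g₂ = g₃ = g ≠ 0 have source entanglement E_s = 1 and satisfy the source-entanglement monogamy relation E_s² ≥ E₁₂² + E₁₃² + E₂₃².) -/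
/-- For `x > 0`, `1 - 1/x ≤ log x`. -/
lemma one_sub_inv_le_log {x : ℝ} (hx : 0 < x) : 1 - 1/x ≤ Real.log x := by
  have h := Real.log_le_sub_one_of_pos (x := 1/x) (by positivity)
  rw [Real.log_div one_ne_zero (ne_of_gt hx), Real.log_one] at h
  linarith

/-- For `p` close to `1`, the binary entropy is between `0` and `0.55`. -/
lemma binEntropy_bound {p : ℝ} (hp : 193/200 ≤ p) (hp1 : p < 1) :
    0 ≤ binEntropy p ∧ binEntropy p ≤ 55/100 := by
  obtain ⟨q, hq⟩ : ∃ q, q = 1 - p := ⟨_, rfl⟩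
  have hp0 : (0:ℝ) < p := by linarith
  have hq0 : 0 < q := by rw [hq]; linarith
  have hqle : q ≤ 7/200 := by rw [hq]; linarith
  obtain ⟨r, hr⟩ : ∃ r, r = Real.sqrt q := ⟨_, rfl⟩
  have hr0 : 0 < r := by rw [hr]; exact Real.sqrt_pos.mpr hq0
  have hrsq : r ^ 2 = q := by rw [hr]; exact Real.sq_sqrt hq0.le
  have hrle : r ≤ 188/1000 := by
    rw [hr, show (188/1000 : ℝ) = Real.sqrt ((188/1000)^2) from
      (Real.sqrt_sq (by norm_num)).symm]
    exact Real.sqrt_le_sqrt (by nlinarith)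
  -- bound -p log p ≤ q
  have hlogp : 1 - 1/p ≤ Real.log p := one_sub_inv_le_log hp0
  have h1 : -p * Real.log p ≤ q := by
    have hle : -p * Real.log p ≤ -p * (1 - 1/p) :=
      mul_le_mul_of_nonpos_left hlogp (by linarith)
    have h2 : -p * (1 - 1/p) = 1 - p := by field_simp; ring
    rw [hq]; linarith
  -- bound -q log q ≤ 2 r - 2 q
  have hlogq : Real.log q = 2 * Real.log r := by
    rw [← hrsq, Real.log_pow]; push_cast; ring
  have hlogr : 1 - 1/r ≤ Real.log r := one_sub_inv_le_log hr0
  have h2 : -q * Real.log q ≤ 2 * r - 2 * q := by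
    have h3 : -q * Real.log q ≤ -q * (2 * (1 - 1/r)) := by
      rw [hlogq]
      exact mul_le_mul_of_nonpos_left (by linarith) (by linarith)
    have h4 : -q * (2 * (1 - 1/r)) = 2 * r - 2 * q := by
      rw [← hrsq]; field_simp; ring
    linarith
  -- numerator bound
  have hN : -p * Real.log p - q * Real.log q ≤ 376/1000 := by linarith
  -- numerator nonnegativity
  have hlogp0 : Real.log p ≤ 0 := Real.log_nonpos hp0.le hp1.le
  have hlogq0 : Real.log q ≤ 0 := Real.log_nonpos hq0.le (by linarith)
  have hN0 : 0 ≤ -p * Real.log p - q * Real.log q := by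
    have hA := mul_nonneg hp0.le (neg_nonneg.mpr hlogp0)
    have hB := mul_nonneg hq0.le (neg_nonneg.mpr hlogq0)
    nlinarith
  have hlog2 : (693/1000 : ℝ) < Real.log 2 := by
    have := Real.log_two_gt_d9; linarith
  have heq : binEntropy p = (-p * Real.log p - q * Real.log q) / Real.log 2 := by
    rw [binEntropy, Real.logb, Real.logb, ← hq]
    ring
  constructor
  · rw [heq]; positivity
  · rw [heq, div_le_iff₀ (by linarith)]
    nlinarith

/-- States from MES₃ of the form `(1/√k)·g_x¹⊗g_x²⊗g_x³|GHZ⟩` with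
`g₁ = g₂ = g₃ = g ≠ 0` satisfy the source-entanglement monogamy relation
`E_s² ≥ E₁₂² + E₁₃² + E₂₃²` with `E_s = 1`. -/
theorem source_monogamy_mes (g : ℝ) (hg : g ∈ Set.Ioo (0 : ℝ) (1 / 2)) :
    1 ≥ 3 * (eof (2 * g * (1 - 4 * g ^ 2) / (1 + 8 * g ^ 3))) ^ 2 := by
  obtain ⟨hg0, hg1⟩ := hg
  obtain ⟨C, hCdef⟩ : ∃ C, C = 2 * g * (1 - 4 * g ^ 2) / (1 + 8 * g ^ 3) := ⟨_, rfl⟩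
  rw [← hCdef]
  have hden : (0:ℝ) < 1 + 8 * g ^ 3 := by nlinarith
  have hC0 : 0 < C := by
    rw [hCdef]; apply div_pos _ hden; nlinarith
  have hCle : C ≤ 7/20 := by
    rw [hCdef, div_le_iff₀ hden]
    nlinarith [mul_nonneg hg0.le (sq_nonneg (g - 1/4)), sq_nonneg (g - 1/4)]
  have hC2 : C ^ 2 ≤ 49/400 := by nlinarith
  obtain ⟨s, hsdef⟩ : ∃ s, s = Real.sqrt (1 - C ^ 2) := ⟨_, rfl⟩
  have hs93 : (93/100 : ℝ) ≤ s := by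
    rw [hsdef, Real.le_sqrt (by norm_num) (by linarith)]; nlinarith
  have hs1 : s < 1 := by
    rw [hsdef]
    have h : Real.sqrt (1 - C ^ 2) < Real.sqrt 1 :=
      Real.sqrt_lt_sqrt (by nlinarith) (by nlinarith)
    simpa using h
  have heof : eof C = binEntropy ((1 + s) / 2) := by rw [eof, hsdef]
  obtain ⟨hE0, hEle⟩ := binEntropy_bound (p := (1 + s) / 2)
    (by linarith) (by linarith)
  rw [heof]
  nlinarith
end

section
/- There exists g ∈ (0,1/2) such that ((1/2 − g)³)² < 3·E(2g(1−4g²)/(1+8g³))². (For states from MES₃ of the form (1/√k)·g_x¹⊗g_x²⊗g_x³|GHZ⟩ with g₁ = g₂ = g₃ = g ≠ 0, the accessible-entanglement monogamy relation E_a² ≥ E₁₂² + E₁₃² + E₂₃² is violated for some parameter values.) -/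
/-- For states from MES₃ of the form `(1/√k)·g_x¹⊗g_x²⊗g_x³|GHZ⟩` with
`g₁ = g₂ = g₃ = g ≠ 0`, the accessible-entanglement monogamy relation
`E_a² ≥ E₁₂² + E₁₃² + E₂₃²` is violated for some parameter values. -/
theorem exists_accessible_monogamy_violation_mes :
    ∃ g ∈ Set.Ioo (0 : ℝ) (1 / 2),
      ((1 / 2 - g) ^ 3) ^ 2 < 3 * (eof (2 * g * (1 - 4 * g ^ 2) / (1 + 8 * g ^ 3))) ^ 2 := by
  refine ⟨1/4, ⟨by norm_num, by norm_num⟩, ?_⟩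
  have harg : 2 * (1/4 : ℝ) * (1 - 4 * (1/4) ^ 2) / (1 + 8 * (1/4) ^ 3) = 1/3 := by norm_num
  rw [harg]
  have h89 : (1 : ℝ) - (1/3) ^ 2 = 8/9 := by norm_num
  have hs0 : (0:ℝ) ≤ Real.sqrt (8/9) := Real.sqrt_nonneg _
  have hs : Real.sqrt (8/9 : ℝ) ≤ 0.96 := by
    have : Real.sqrt (8/9 : ℝ) ≤ Real.sqrt (0.96 ^ 2) := by
      apply Real.sqrt_le_sqrt; norm_num
    rwa [Real.sqrt_sq (by norm_num)] at this
  set s := Real.sqrt (8/9 : ℝ) with hsdef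
  set p := (1 + s) / 2 with hp
  have hp1 : p ≤ 0.98 := by rw [hp]; linarith
  have hp0 : (1/2:ℝ) ≤ p := by rw [hp]; linarith
  have hq : (0.02 : ℝ) ≤ 1 - p := by linarith
  have hq2 : 1 - p ≤ 1/2 := by linarith
  -- eof (1/3) = binEntropy p
  have heof : eof (1/3) = binEntropy p := by
    rw [eof, h89]
  -- binEntropy p ≥ 1 - p
  have h1 : -p * Real.logb 2 p ≥ 0 := by
    have : Real.logb 2 p ≤ 0 := Real.logb_nonpos (by norm_num) (by linarith) (by linarith)
    nlinarith
  have h2 : Real.logb 2 (1 - p) ≤ -1 := by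
    have hmono : Real.logb 2 (1 - p) ≤ Real.logb 2 (1/2) := by
      apply Real.logb_le_logb_of_le (by norm_num) (by linarith) hq2
    have : Real.logb 2 (1/2 : ℝ) = -1 := by
      rw [show (1/2:ℝ) = 2⁻¹ by norm_num, Real.logb_inv, Real.logb_self_eq_one] <;> norm_num
    linarith
  have h3 : -(1 - p) * Real.logb 2 (1 - p) ≥ 1 - p := by nlinarith
  have hbe : binEntropy p ≥ 0.02 := by
    rw [binEntropy]; nlinarith
  rw [heof]
  nlinarith [hbe]
end

section
/- There exist x, y, z > 0 and t > 0 with x + y + z + t = 1 such that (27xyz)² < E(2√(xy))² + E(2√(xz))² + E(2√(yz))². (Some three-qubit W-class pure states violate the accessible-entanglement monogamy relation E_a² ≥ E₁₂² + E₁₃² + E₂₃².) -/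
lemma eof_fifty : (1:ℝ)/10000 ≤ eof (1/50) := by
  have h1 : (1:ℝ) - (1/50)^2 = 2499/2500 := by norm_num
  unfold eof binEntropy
  rw [h1]
  set q := Real.sqrt (2499/2500) with hq
  have hq0 : 0 ≤ q := Real.sqrt_nonneg _
  have hq1 : q ≤ 4999/5000 := by
    rw [show (4999/5000:ℝ) = Real.sqrt ((4999/5000)^2) from
      (Real.sqrt_sq (by norm_num)).symm]
    exact Real.sqrt_le_sqrt (by norm_num)
  set p := (1 + q) / 2 with hp
  have hp1 : 1/2 ≤ p := by rw [hp]; linarith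
  have hp2 : p ≤ 9999/10000 := by rw [hp]; linarith
  have h1p : (1:ℝ)/10000 ≤ 1 - p := by linarith
  have h1p2 : 1 - p ≤ 1/2 := by linarith
  have hL1 : Real.logb 2 p ≤ 0 :=
    Real.logb_nonpos (by norm_num) (by linarith) (by linarith)
  have hterm1 : 0 ≤ -p * Real.logb 2 p := by nlinarith
  have hL2 : Real.logb 2 (1 - p) ≤ -1 := by
    have : Real.logb 2 (1 - p) ≤ Real.logb 2 (1/2) :=
      Real.logb_le_logb_of_le (by norm_num) (by linarith) h1p2
    have h12 : Real.logb 2 (1/2 : ℝ) = -1 := by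
      rw [show (1/2:ℝ) = 2⁻¹ by norm_num, Real.logb_inv, Real.logb_self_eq_one] <;> norm_num
    linarith
  have hterm2 : 1 - p ≤ -(1 - p) * Real.logb 2 (1 - p) := by nlinarith
  linarith

/-- Some three-qubit W-class pure states violate the accessible-entanglement
monogamy relation `E_a² ≥ E₁₂² + E₁₃² + E₂₃²`. -/
theorem exists_accessible_monogamy_violation_W_class :
    ∃ x y z t : ℝ, 0 < x ∧ 0 < y ∧ 0 < z ∧ 0 < t ∧ x + y + z + t = 1 ∧
      (27 * x * y * z) ^ 2 <
        (eof (2 * Real.sqrt (x * y))) ^ 2 + (eof (2 * Real.sqrt (x * z))) ^ 2 +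
          (eof (2 * Real.sqrt (y * z))) ^ 2 := by
  refine ⟨1/100, 1/100, 1/100, 97/100, by norm_num, by norm_num, by norm_num,
    by norm_num, by norm_num, ?_⟩
  have hs : Real.sqrt ((1:ℝ)/100 * (1/100)) = 1/100 := by
    rw [show (1:ℝ)/100 * (1/100) = (1/100)^2 by norm_num, Real.sqrt_sq (by norm_num)]
  rw [hs]
  have h2 : (2:ℝ) * (1/100) = 1/50 := by norm_num
  rw [h2]
  have he := eof_fifty
  have hsq : (1:ℝ)/10000 ^ 2 ≤ (eof (1/50))^2 := by nlinarith
  nlinarith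
end

section
/- 3·E(2/3)² < 1, where E(2/3) = h((1 + √5/3)/2). (The W state |W⟩ = (1/√3)(|100⟩+|010⟩+|001⟩) has E_s = E_a = 1 and E₁₂ = E₁₃ = E₂₃ = E(2/3) ≈ 0.550048, so its monogamy scores M₁ = M₂ = 1 − 3·E(2/3)² ≈ 0.0923 are strictly positive, i.e. the W state satisfies both monogamy relations E_s² ≥ E₁₂² + E₁₃² + E₂₃² and E_a² ≥ E₁₂² + E₁₃² + E₂₃².) -/
set_option maxHeartbeats 1000000 in
/-- The W state satisfies both monogamy relations: `3·E(2/3)² < 1`. -/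
theorem W_state_monogamy : 3 * (eof (2 / 3)) ^ 2 < 1 := by
  set s := Real.sqrt 5 with hsdef
  have hs2 : s ^ 2 = 5 := Real.sq_sqrt (by norm_num)
  have hsqrt : Real.sqrt (1 - (2/3:ℝ)^2) = s / 3 := by
    rw [show (1 - (2/3:ℝ)^2) = (s / 3)^2 by linear_combination (-1/9 : ℝ) * hs2]
    exact Real.sqrt_sq (by positivity)
  have hs0 : 0 ≤ s := Real.sqrt_nonneg 5
  have hslb : 2.236 < s := by nlinarith
  have hsub : s < 2.2361 := by nlinarith
  have heq : eof (2/3) = binEntropy ((1 + s / 3) / 2) := by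
    rw [eof, hsqrt]
  set p : ℝ := (1 + s / 3) / 2 with hpdef
  set q : ℝ := 1 - p with hqdef
  have hp0 : 0 < p := by rw [hpdef]; nlinarith
  have hp1 : p < 1 := by rw [hpdef]; nlinarith
  have hq0 : 0 < q := by simp [hqdef]; linarith
  have hq1 : q < 1 := by rw [hqdef]; linarith
  have hqub : q < 0.127334 := by rw [hqdef, hpdef]; nlinarith
  have hlog2 : (0.6931471803:ℝ) < Real.log 2 := Real.log_two_gt_d9
  have hlog2pos : (0:ℝ) < Real.log 2 := by linarith
  -- log p ≥ -(q/p): from log(1/p) ≤ 1/p - 1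
  have l1 : -Real.log p ≤ p⁻¹ - 1 := by
    have := Real.log_le_sub_one_of_pos (show (0:ℝ) < p⁻¹ by positivity)
    rwa [Real.log_inv] at this
  -- log (8q) ≥ 1 - 1/(8q)
  have l2 : 1 - (8*q)⁻¹ ≤ Real.log (8*q) := by
    have := Real.log_le_sub_one_of_pos (show (0:ℝ) < (8*q)⁻¹ by positivity)
    rw [Real.log_inv] at this
    linarith
  have l3 : Real.log (8*q) = 3 * Real.log 2 + Real.log q := by
    rw [Real.log_mul (by norm_num) (ne_of_gt hq0),
      show (8:ℝ) = 2 ^ 3 by norm_num, Real.log_pow]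
    push_cast; ring
  -- nonnegativity of entropy terms
  have hlp : Real.log p ≤ 0 := Real.log_nonpos (le_of_lt hp0) (le_of_lt hp1)
  have hlq : Real.log q ≤ 0 := Real.log_nonpos (le_of_lt hq0) (le_of_lt hq1)
  have hE : eof (2/3) = (-p * Real.log p - q * Real.log q) / Real.log 2 := by
    rw [heq, binEntropy, Real.logb, Real.logb, ← hqdef]
    ring
  set E : ℝ := eof (2/3) with hEdef
  have hEnn : 0 ≤ E := by
    rw [hE]
    apply div_nonneg _ (le_of_lt hlog2pos)
    nlinarith
  -- key upper bound: E * log 2 ≤ 3 q log 2 + 1/8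
  have hkey : E * Real.log 2 ≤ 3 * q * Real.log 2 + 1/8 := by
    rw [hE, div_mul_cancel₀ _ (ne_of_gt hlog2pos)]
    have t1 : -p * Real.log p ≤ q := by
      have : p * (-Real.log p) ≤ p * (p⁻¹ - 1) :=
        mul_le_mul_of_nonneg_left l1 (le_of_lt hp0)
      rw [mul_sub, mul_inv_cancel₀ (ne_of_gt hp0)] at this
      have hq : q = 1 - p := hqdef
      nlinarith
    have t2 : -q * Real.log q ≤ 3 * q * Real.log 2 - q + 1/8 := by
      have : q * (1 - (8*q)⁻¹) ≤ q * Real.log (8*q) :=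
        mul_le_mul_of_nonneg_left l2 (le_of_lt hq0)
      rw [l3] at this
      have h8 : q * (8*q)⁻¹ = 1/8 := by
        field_simp
      nlinarith
    linarith
  have hEub : E ≤ 3 * q + 1 / (8 * Real.log 2) := by
    have h2 : (3 * q * Real.log 2 + 1/8) / Real.log 2 = 3 * q + 1 / (8 * Real.log 2) := by
      field_simp
    rw [← h2]
    exact (le_div_iff₀ hlog2pos).mpr hkey
  have hnum : 3 * q + 1 / (8 * Real.log 2) < 0.56234 := by
    have : 1 / (8 * Real.log 2) < 0.180338 := by
      rw [div_lt_iff₀ (by positivity)]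
      linarith
    linarith
  have hEub' : E < 0.56234 := lt_of_le_of_lt hEub hnum
  have h1 : E ^ 2 < 0.56234 ^ 2 := by
    apply sq_lt_sq' <;> linarith
  have h2 : (0.56234:ℝ) ^ 2 < 1/3 := by norm_num
  linarith
end
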